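/- (Theorem 1, fidelity form) Let d ≥ 1 and let ρ_{ABC} be a density matrix on ℂ^d ⊗ ℂ^d ⊗ ℂ^{d_C} such that its partial trace over C, ρ_{AB} = tr_C ρ_{ABC}, is separable. Then for every maximally entangled state Ψ on ℂ^d ⊗ ℂ^d and every density matrix ρ_C on ℂ^{d_C}, the Uhlmann root fidelity satisfies F(ρ_{ABC}, |Ψ⟩⟨Ψ| ⊗ ρ_C) ≤ 1/√d; equivalently, the Bures angle arccos F(ρ_{ABC}, |Ψ⟩⟨Ψ| ⊗ ρ_C) is at least arccos(1/√d). -/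

import Mathlib

open scoped Matrix Kronecker ComplexOrder

noncomputable section

/-- Hermitian inner product on `n → ℂ` (conjugate-linear in the first argument). -/
def cinner {n : Type*} [Fintype n] (v w : n → ℂ) : ℂ :=
  ∑ i, (starRingEnd ℂ) (v i) * w i

/-- Tensor (Kronecker) product of vectors. -/
def tensorVec {α β : Type*} (v : α → ℂ) (w : β → ℂ) : α × β → ℂ :=
  fun p => v p.1 * w p.2

/-- The projector `|v⟩⟨v|`. -/
def vecProj {n : Type*} (v : n → ℂ) : Matrix n n ℂ :=
  Matrix.of fun i j => v i * (starRingEnd ℂ) (v j)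

/-- A density matrix: positive semidefinite with unit trace. -/
def IsDensityMatrix {n : Type*} [Fintype n] (ρ : Matrix n n ℂ) : Prop :=
  ρ.PosSemidef ∧ ρ.trace = 1

open Classical in
/-- Positive semidefinite square root (0 on non-PSD input). -/
def msqrt {n : Type*} [Fintype n] [DecidableEq n] (ρ : Matrix n n ℂ) : Matrix n n ℂ :=
  if h : ρ.PosSemidef then
    h.1.eigenvectorUnitary.1 * Matrix.diagonal ((↑) ∘ (√·) ∘ h.1.eigenvalues) *
      (star h.1.eigenvectorUnitary : Matrix n n ℂ)
  else 0

/-- Uhlmann root fidelity `F(ρ,σ) = tr √(√ρ σ √ρ)`. -/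
def rootFidelity {n : Type*} [Fintype n] [DecidableEq n] (ρ σ : Matrix n n ℂ) : ℝ :=
  ((msqrt (msqrt ρ * σ * msqrt ρ)).trace).re

/-- Partial trace over the second tensor factor. -/
def ptraceC {α γ : Type*} [Fintype γ] (ρ : Matrix (α × γ) (α × γ) ℂ) : Matrix α α ℂ :=
  Matrix.of fun i j => ∑ k, ρ (i, k) (j, k)

/-- Partial trace over the first tensor factor. -/
def ptraceA {α β : Type*} [Fintype α] (ρ : Matrix (α × β) (α × β) ℂ) : Matrix β β ℂ :=
  Matrix.of fun i j => ∑ k, ρ (k, i) (k, j)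

/-- Partial transpose on the second tensor factor. -/
def ptB {α β : Type*} (ρ : Matrix (α × β) (α × β) ℂ) : Matrix (α × β) (α × β) ℂ :=
  Matrix.of fun p q => ρ (p.1, q.2) (q.1, p.2)

open Classical in
/-- Negativity: the sum of the absolute values of the negative eigenvalues of
the partial transpose (0 if the partial transpose is not Hermitian). -/
def negativity {α β : Type*} [Fintype α] [Fintype β] [DecidableEq α] [DecidableEq β]
    (ρ : Matrix (α × β) (α × β) ℂ) : ℝ :=
  if h : (ptB ρ).IsHermitian then ∑ i, max 0 (- h.eigenvalues i) else 0

/-- A family of vectors is an orthonormal basis family (orthonormal, indexed by the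
same finite type as the dimension, hence a basis). -/
def IsONB {n : Type*} [Fintype n] [DecidableEq n] (x : n → n → ℂ) : Prop :=
  ∀ j k, cinner (x j) (x k) = if j = k then 1 else 0

/-- Separability: a finite convex combination of projectors onto product unit vectors. -/
def IsSeparableDM {α β : Type*} [Fintype α] [Fintype β]
    (ρ : Matrix (α × β) (α × β) ℂ) : Prop :=
  ∃ (m : ℕ) (p : Fin m → ℝ) (a : Fin m → α → ℂ) (b : Fin m → β → ℂ),
    (∀ j, 0 ≤ p j) ∧ (∑ j, p j = 1) ∧
    (∀ j, cinner (a j) (a j) = 1) ∧ (∀ j, cinner (b j) (b j) = 1) ∧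
    ρ = ∑ j, (p j : ℂ) • vecProj (tensorVec (a j) (b j))

/-- A maximally entangled state on `ℂ^d ⊗ ℂ^d`. -/
def IsMaxEnt {d : ℕ} (Ψ : Fin d × Fin d → ℂ) : Prop :=
  ∃ x y : Fin d → Fin d → ℂ, IsONB x ∧ IsONB y ∧
    Ψ = ((Real.sqrt d : ℂ)⁻¹) • ∑ j, tensorVec (x j) (y j)


/-! ### Auxiliary lemmas -/

open scoped MatrixOrder in
lemma msqrt_eq_cfc {n : Type*} [Fintype n] [DecidableEq n] {ρ : Matrix n n ℂ}
    (h : ρ.PosSemidef) : msqrt ρ = CFC.sqrt ρ := by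
  have h0 : 0 ≤ ρ := Matrix.nonneg_iff_posSemidef.mpr h
  rw [msqrt, dif_pos h, CFC.sqrt_eq_cfc, cfc_nnreal_eq_real _ ρ h0, h.1.cfc_eq]
  simp only [Matrix.IsHermitian.cfc, Unitary.conjStarAlgAut_apply]
  congr 3
  funext i
  simp [Real.coe_sqrt, h.eigenvalues_nonneg i]

def Matrix.PosSemidef.sqrt {n : Type*} [Fintype n] [DecidableEq n] {A : Matrix n n ℂ}
    (_h : A.PosSemidef) : Matrix n n ℂ := msqrt A

open scoped MatrixOrder in
lemma Matrix.PosSemidef.posSemidef_sqrt {n : Type*} [Fintype n] [DecidableEq n]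
    {A : Matrix n n ℂ} (h : A.PosSemidef) : h.sqrt.PosSemidef := by
  rw [Matrix.PosSemidef.sqrt, msqrt_eq_cfc h]
  exact Matrix.nonneg_iff_posSemidef.mp (CFC.sqrt_nonneg A)

open scoped MatrixOrder in
lemma Matrix.PosSemidef.sqrt_mul_self {n : Type*} [Fintype n] [DecidableEq n]
    {A : Matrix n n ℂ} (h : A.PosSemidef) : h.sqrt * h.sqrt = A := by
  rw [Matrix.PosSemidef.sqrt, msqrt_eq_cfc h]
  exact CFC.sqrt_mul_sqrt_self A (Matrix.nonneg_iff_posSemidef.mpr h)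

open scoped MatrixOrder in
lemma Matrix.PosSemidef.eq_sqrt_of_sq_eq {n : Type*} [Fintype n] [DecidableEq n]
    {A : Matrix n n ℂ} (hA : A.PosSemidef) {B : Matrix n n ℂ} (hB : B.PosSemidef)
    (hAB : A ^ 2 = B) : A = hB.sqrt := by
  rw [Matrix.PosSemidef.sqrt, msqrt_eq_cfc hB, eq_comm,
    CFC.sqrt_eq_iff B A (Matrix.nonneg_iff_posSemidef.mpr hB) (Matrix.nonneg_iff_posSemidef.mpr hA),
    ← pow_two, hAB]


lemma msqrt_eq {n : Type*} [Fintype n] [DecidableEq n] {ρ : Matrix n n ℂ}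
    (h : ρ.PosSemidef) : msqrt ρ = h.sqrt := by
  rw [Matrix.PosSemidef.sqrt]

lemma psd_trace_re_nonneg {n : Type*} [Fintype n] [DecidableEq n] {M : Matrix n n ℂ}
    (hM : M.PosSemidef) : 0 ≤ M.trace.re := by
  rw [Matrix.trace, Complex.re_sum]
  refine Finset.sum_nonneg fun i _ => ?_
  have := (Complex.nonneg_iff.mp (hM.dotProduct_mulVec_nonneg (Pi.single i 1))).1
  simpa [dotProduct, Matrix.mulVec, Pi.single_apply, Finset.mul_sum] using this

lemma psd_trace_mul_re_nonneg {n : Type*} [Fintype n] [DecidableEq n] {S T : Matrix n n ℂ}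
    (hS : S.PosSemidef) (hT : T.PosSemidef) : 0 ≤ (S * T).trace.re := by
  have h1 : S * T = S * (hT.sqrt * hT.sqrt) := by rw [hT.sqrt_mul_self]
  have h2 : (S * (hT.sqrt * hT.sqrt)).trace = (hT.sqrt * S * hT.sqrt).trace := by
    rw [← Matrix.trace_mul_cycle, mul_assoc]
  have h3 : (hT.sqrt * S * hT.sqrt).PosSemidef := by
    have := hS.mul_mul_conjTranspose_same hT.sqrt
    rwa [hT.posSemidef_sqrt.1.eq] at this
  rw [h1, h2]
  exact psd_trace_re_nonneg h3

/-- Cauchy-Schwarz for finite sums of complex numbers. -/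
lemma cs_sum {m : Type*} [Fintype m] (f g : m → ℂ) :
    ‖∑ i, f i * g i‖ ≤ Real.sqrt (∑ i, ‖f i‖ ^ 2) * Real.sqrt (∑ i, ‖g i‖ ^ 2) := by
  let x : EuclideanSpace ℂ m := WithLp.toLp 2 (fun i => star (f i))
  let y : EuclideanSpace ℂ m := WithLp.toLp 2 (fun i => g i)
  have h1 : (inner ℂ x y : ℂ) = ∑ i, f i * g i := by
    simp [x, y, PiLp.inner_apply, RCLike.inner_apply]
    exact Finset.sum_congr rfl fun i _ => mul_comm _ _
  have h2 := norm_inner_le_norm (𝕜 := ℂ) x y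
  rw [h1] at h2
  refine h2.trans ?_
  rw [EuclideanSpace.norm_eq, EuclideanSpace.norm_eq]
  gcongr <;> simp [x, y]

lemma trace_conjT_mul {m n : Type*} [Fintype m] [Fintype n] (X Y : Matrix m n ℂ) :
    (Xᴴ * Y).trace = ∑ p : m × n, (starRingEnd ℂ) (X p.1 p.2) * Y p.1 p.2 := by
  rw [Fintype.sum_prod_type]
  rw [Finset.sum_comm]
  simp [Matrix.trace, Matrix.mul_apply, Matrix.conjTranspose_apply, Matrix.diag]

lemma trace_conjT_mul_self_re {m n : Type*} [Fintype m] [Fintype n] (X : Matrix m n ℂ) :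
    ((Xᴴ * X).trace).re = ∑ p : m × n, ‖X p.1 p.2‖ ^ 2 := by
  rw [trace_conjT_mul, Complex.re_sum]
  congr 1; ext p
  rw [mul_comm, Complex.mul_conj, Complex.ofReal_re, Complex.normSq_eq_norm_sq]

/-- Cauchy-Schwarz for the Frobenius inner product. -/
lemma norm_trace_conjT_mul_le {m n : Type*} [Fintype m] [Fintype n] (X Y : Matrix m n ℂ) :
    ‖(Xᴴ * Y).trace‖ ≤ Real.sqrt ((Xᴴ * X).trace.re) * Real.sqrt ((Yᴴ * Y).trace.re) := by
  rw [trace_conjT_mul, trace_conjT_mul_self_re, trace_conjT_mul_self_re]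
  have := cs_sum (fun p : m × n => (starRingEnd ℂ) (X p.1 p.2)) (fun p : m × n => Y p.1 p.2)
  simpa using this

/-- Key lemma: `tr √(C Cᴴ) ≤ ‖A‖_F ‖B‖_F` for `C = A B`. -/
lemma trace_msqrt_factor_le {n : Type*} [Fintype n] [DecidableEq n] (A B : Matrix n n ℂ) :
    ((msqrt ((A * B) * (A * B)ᴴ)).trace).re ≤
      Real.sqrt ((A * Aᴴ).trace.re) * Real.sqrt ((B * Bᴴ).trace.re) := by
  set C := A * B with hC
  have hM : (C * Cᴴ).PosSemidef := Matrix.posSemidef_self_mul_conjTranspose C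
  set lam := hM.1.eigenvalues with hlam
  set U : Matrix n n ℂ := (hM.1.eigenvectorUnitary : Matrix n n ℂ) with hUdef
  have hU1 : Uᴴ * U = 1 := by
    have := Matrix.mem_unitaryGroup_iff'.mp hM.1.eigenvectorUnitary.2
    rwa [Matrix.star_eq_conjTranspose] at this
  have hU2 : U * Uᴴ = 1 := by
    have := Matrix.mem_unitaryGroup_iff.mp hM.1.eigenvectorUnitary.2
    rwa [Matrix.star_eq_conjTranspose] at this
  have hspec : Uᴴ * (C * Cᴴ) * U = Matrix.diagonal (fun i => ((lam i : ℝ) : ℂ)) := by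
    have := hM.1.conjStarAlgAut_star_eigenvectorUnitary
    simp only [Unitary.conjStarAlgAut_apply, Unitary.coe_star, star_star] at this
    rw [Matrix.star_eq_conjTranspose] at this
    exact this
  have hsq : hM.sqrt = U * Matrix.diagonal (fun i => ((Real.sqrt (lam i) : ℝ) : ℂ)) * Uᴴ := by
    rw [Matrix.PosSemidef.sqrt, msqrt, dif_pos hM]
    rfl
  have htr : (msqrt (C * Cᴴ)).trace = ((∑ i, Real.sqrt (lam i) : ℝ) : ℂ) := by
    rw [msqrt_eq hM, hsq, Matrix.trace_mul_cycle, hU1, one_mul, Matrix.trace_diagonal]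
    push_cast
    rfl
  -- the pseudo-inverse weights
  set s : n → ℝ := fun i => if lam i = 0 then 0 else (Real.sqrt (lam i))⁻¹ with hs
  have hlam_nn : ∀ i, 0 ≤ lam i := fun i => hM.eigenvalues_nonneg i
  have hsqrt_nz : ∀ i, lam i ≠ 0 → Real.sqrt (lam i) ≠ 0 := by
    intro i h hz
    exact h (by rw [← Real.sq_sqrt (hlam_nn i), hz]; ring)
  have hlam_s : ∀ i, lam i * s i = Real.sqrt (lam i) := by
    intro i
    by_cases h : lam i = 0
    · simp [hs, h]
    · rw [hs]
      simp only [if_neg h]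
      nth_rewrite 1 [← Real.mul_self_sqrt (hlam_nn i)]
      rw [mul_assoc, mul_inv_cancel₀ (hsqrt_nz i h), mul_one]
  have hs_mul : ∀ i, s i * lam i * s i * s i = s i := by
    intro i
    by_cases h : lam i = 0
    · simp [hs, h]
    · have h1 : s i * lam i = Real.sqrt (lam i) := by rw [mul_comm]; exact hlam_s i
      rw [h1, hs]
      simp only [if_neg h]
      rw [mul_inv_cancel₀ (hsqrt_nz i h), one_mul]
  set D : Matrix n n ℂ := Matrix.diagonal (fun i => ((s i : ℝ) : ℂ)) with hD
  set X := Aᴴ * U with hX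
  set Y := B * Cᴴ * U * D with hY
  have hXY : Xᴴ * Y = Matrix.diagonal (fun i => ((Real.sqrt (lam i) : ℝ) : ℂ)) := by
    have h1 : Xᴴ * Y = (Uᴴ * (C * Cᴴ) * U) * D := by
      rw [hX, hY]
      simp only [Matrix.conjTranspose_mul, Matrix.conjTranspose_conjTranspose, hC, mul_assoc]
    rw [h1, hspec, hD, Matrix.diagonal_mul_diagonal]
    refine congrArg Matrix.diagonal (funext fun i => ?_)
    rw [← Complex.ofReal_mul, hlam_s i]
  have htr2 : (Xᴴ * Y).trace = ((∑ i, Real.sqrt (lam i) : ℝ) : ℂ) := by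
    rw [hXY, Matrix.trace_diagonal]
    push_cast
    rfl
  have hsum_nn : 0 ≤ ∑ i, Real.sqrt (lam i) :=
    Finset.sum_nonneg fun i _ => Real.sqrt_nonneg _
  have hb := norm_trace_conjT_mul_le X Y
  rw [htr2] at hb
  rw [Complex.norm_real, Real.norm_eq_abs, abs_of_nonneg hsum_nn] at hb
  have hF : ((msqrt (C * Cᴴ)).trace).re = ∑ i, Real.sqrt (lam i) := by
    rw [htr, Complex.ofReal_re]
  rw [hF]
  -- compute / bound the two Frobenius norms
  have hXX : (Xᴴ * X).trace = (A * Aᴴ).trace := by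
    have h1 : Xᴴ * X = Uᴴ * (A * (Aᴴ * U)) := by
      rw [hX]
      simp only [Matrix.conjTranspose_mul, Matrix.conjTranspose_conjTranspose, mul_assoc]
    rw [h1, Matrix.trace_mul_comm, ← mul_assoc, mul_assoc (A * Aᴴ) U Uᴴ, hU2, mul_one]
  -- the Y part
  set E := Cᴴ * U * D with hE
  have hDher : Dᴴ = D := by
    rw [hD, Matrix.diagonal_conjTranspose]
    refine congrArg Matrix.diagonal (funext fun i => ?_)
    simp [Complex.conj_ofReal]
  have hEH : Eᴴ = D * (Uᴴ * C) := by
    rw [hE]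
    simp only [Matrix.conjTranspose_mul, Matrix.conjTranspose_conjTranspose, hDher, mul_assoc]
  have hmid : Eᴴ * E = Matrix.diagonal (fun i => ((s i * lam i * s i : ℝ) : ℂ)) := by
    have h1 : Eᴴ * E = D * ((Uᴴ * (C * Cᴴ) * U) * D) := by
      rw [hEH, hE]
      simp only [mul_assoc]
    rw [h1, hspec, hD, Matrix.diagonal_mul_diagonal, Matrix.diagonal_mul_diagonal]
    refine congrArg Matrix.diagonal (funext fun i => ?_)
    push_cast
    ring
  have hdd : Matrix.diagonal (fun i => ((s i * lam i * s i : ℝ) : ℂ)) * D = D := by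
    rw [hD, Matrix.diagonal_mul_diagonal]
    refine congrArg Matrix.diagonal (funext fun i => ?_)
    rw [← Complex.ofReal_mul, hs_mul i]
  have hMEH : (Eᴴ * E) * Eᴴ = Eᴴ := by
    rw [hmid, hEH, ← mul_assoc, hdd]
  have hGidem : (E * Eᴴ) * (E * Eᴴ) = E * Eᴴ := by
    calc (E * Eᴴ) * (E * Eᴴ) = E * ((Eᴴ * E) * Eᴴ) := by simp only [mul_assoc]
    _ = E * Eᴴ := by rw [hMEH]
  have hGher : (E * Eᴴ)ᴴ = E * Eᴴ := by
    simp [Matrix.conjTranspose_mul]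
  have h1G : (1 - E * Eᴴ).PosSemidef := by
    have h' : (1 - E * Eᴴ) * (1 - E * Eᴴ)ᴴ = 1 - E * Eᴴ := by
      rw [Matrix.conjTranspose_sub, Matrix.conjTranspose_one, hGher, sub_mul, one_mul,
        mul_sub, mul_one, hGidem]
      abel
    have := Matrix.posSemidef_self_mul_conjTranspose (1 - E * Eᴴ)
    rwa [h'] at this
  have hBB : (Bᴴ * B).PosSemidef := Matrix.posSemidef_conjTranspose_mul_self B
  have hkey := psd_trace_mul_re_nonneg hBB h1G
  have hYE : Y = B * E := by
    rw [hY, hE]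
    simp only [mul_assoc]
  have hYYtr : (Yᴴ * Y).trace = ((Bᴴ * B) * (E * Eᴴ)).trace := by
    rw [hYE]
    have h1 : (B * E)ᴴ * (B * E) = Eᴴ * ((Bᴴ * B) * E) := by
      simp only [Matrix.conjTranspose_mul, mul_assoc]
    rw [h1, Matrix.trace_mul_comm, mul_assoc]
  have hYY : ((Yᴴ * Y).trace).re ≤ ((B * Bᴴ).trace).re := by
    have hsub : (Bᴴ * B) * (1 - E * Eᴴ) = Bᴴ * B - (Bᴴ * B) * (E * Eᴴ) := by
      rw [mul_sub, mul_one]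
    rw [hsub, Matrix.trace_sub, Complex.sub_re] at hkey
    have := sub_nonneg.mp hkey
    rw [hYYtr]
    calc (((Bᴴ * B) * (E * Eᴴ)).trace).re ≤ ((Bᴴ * B).trace).re := this
    _ = ((B * Bᴴ).trace).re := by rw [Matrix.trace_mul_comm]
  calc ∑ i, Real.sqrt (lam i)
      ≤ Real.sqrt ((Xᴴ * X).trace.re) * Real.sqrt ((Yᴴ * Y).trace.re) := hb
    _ ≤ Real.sqrt ((A * Aᴴ).trace.re) * Real.sqrt ((B * Bᴴ).trace.re) := by
        rw [hXX]
        exact mul_le_mul_of_nonneg_left (Real.sqrt_le_sqrt hYY) (Real.sqrt_nonneg _)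


lemma star_cinner {n : Type*} [Fintype n] (v w : n → ℂ) : star (cinner v w) = cinner w v := by
  simp only [cinner, star_sum, star_mul', RCLike.star_def, RingHom.coe_coe,
    starRingEnd_self_apply]
  exact Finset.sum_congr rfl fun i _ => by ring

lemma norm_cinner_symm {n : Type*} [Fintype n] (v w : n → ℂ) :
    ‖cinner v w‖ = ‖cinner w v‖ := by
  rw [← star_cinner v w, norm_star]

lemma cinner_tensor {α β : Type*} [Fintype α] [Fintype β] (a c : α → ℂ) (b d : β → ℂ) :
    cinner (tensorVec a b) (tensorVec c d) = cinner a c * cinner b d := by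
  rw [cinner, Fintype.sum_prod_type, cinner, cinner, Finset.sum_mul_sum]
  refine Finset.sum_congr rfl fun i _ => Finset.sum_congr rfl fun k _ => ?_
  simp only [tensorVec, map_mul]
  ring

/-- Parseval equality for a square orthonormal family. -/
lemma onb_parseval {d : ℕ} {x : Fin d → Fin d → ℂ} (hx : IsONB x) (a : Fin d → ℂ) :
    ∑ k, ‖cinner (x k) a‖ ^ 2 = (cinner a a).re := by
  classical
  set Xc : Matrix (Fin d) (Fin d) ℂ := Matrix.of fun k i => star (x k i) with hXc
  have h1 : Xc * Xcᴴ = 1 := by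
    ext j k
    simp only [Matrix.mul_apply, hXc, Matrix.of_apply, Matrix.conjTranspose_apply, star_star,
      Matrix.one_apply]
    rw [← hx j k, cinner]
    rfl
  have h2 : Xcᴴ * Xc = 1 := mul_eq_one_comm.mp h1
  set w : Fin d → ℂ := Xc *ᵥ a with hw
  have hcw : ∀ k, cinner (x k) a = w k := by
    intro k
    simp only [hw, Matrix.mulVec, dotProduct, hXc, Matrix.of_apply, cinner]
    rfl
  have h3 : cinner w w = cinner a a := by
    have : cinner w w = dotProduct (star w) w := by
      simp [cinner, dotProduct]
    rw [this, hw, Matrix.star_mulVec, Matrix.dotProduct_mulVec, Matrix.vecMul_vecMul, h2,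
      Matrix.vecMul_one]
    simp [cinner, dotProduct]
  calc ∑ k, ‖cinner (x k) a‖ ^ 2 = ∑ k, ‖w k‖ ^ 2 := by simp_rw [hcw]
  _ = (cinner w w).re := by
      rw [cinner, Complex.re_sum]
      refine Finset.sum_congr rfl fun k _ => ?_
      rw [mul_comm, Complex.mul_conj, Complex.ofReal_re, Complex.normSq_eq_norm_sq]
  _ = (cinner a a).re := by rw [h3]

lemma cinner_smul_right {n : Type*} [Fintype n] (c : ℂ) (v w : n → ℂ) :
    cinner v (c • w) = c * cinner v w := by
  simp [cinner, Finset.mul_sum]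
  exact Finset.sum_congr rfl fun i _ => by ring

lemma cinner_sum_right {n : Type*} [Fintype n] {m : Type*} [Fintype m] (v : n → ℂ)
    (w : m → n → ℂ) : cinner v (∑ j, w j) = ∑ j, cinner v (w j) := by
  simp only [cinner, Finset.sum_apply]
  rw [Finset.sum_comm]
  exact Finset.sum_congr rfl fun i _ => by rw [Finset.mul_sum]

lemma maxent_overlap {d : ℕ} (hd : 1 ≤ d) {Ψ : Fin d × Fin d → ℂ} (hΨ : IsMaxEnt Ψ)
    {a b : Fin d → ℂ} (ha : cinner a a = 1) (hb : cinner b b = 1) :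
    ‖cinner (tensorVec a b) Ψ‖ ^ 2 ≤ (d : ℝ)⁻¹ := by
  obtain ⟨x, y, hx, hy, hpsi⟩ := hΨ
  have hdpos : (0 : ℝ) < d := by exact_mod_cast hd
  have h1 : cinner (tensorVec a b) Ψ
      = ((Real.sqrt d : ℂ))⁻¹ * ∑ k, cinner a (x k) * cinner b (y k) := by
    rw [hpsi, cinner_smul_right, cinner_sum_right]
    congr 1
    exact Finset.sum_congr rfl fun k _ => cinner_tensor a (x k) b (y k)
  have h2 : ‖∑ k, cinner a (x k) * cinner b (y k)‖ ≤ 1 := by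
    refine (cs_sum _ _).trans ?_
    have hxa : ∑ k, ‖cinner a (x k)‖ ^ 2 = 1 := by
      have := onb_parseval hx a
      simp_rw [← norm_cinner_symm a]  at this
      rw [this, ha, Complex.one_re]
    have hyb : ∑ k, ‖cinner b (y k)‖ ^ 2 = 1 := by
      have := onb_parseval hy b
      simp_rw [← norm_cinner_symm b] at this
      rw [this, hb, Complex.one_re]
    rw [hxa, hyb, Real.sqrt_one, mul_one]
  have h3 : ‖cinner (tensorVec a b) Ψ‖ ≤ (Real.sqrt d)⁻¹ := by
    rw [h1, norm_mul]
    have : ‖((Real.sqrt d : ℂ))⁻¹‖ = (Real.sqrt d)⁻¹ := by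
      rw [norm_inv, Complex.norm_real, Real.norm_eq_abs, abs_of_nonneg (Real.sqrt_nonneg _)]
    rw [this]
    calc (Real.sqrt d)⁻¹ * ‖∑ k, cinner a (x k) * cinner b (y k)‖
        ≤ (Real.sqrt d)⁻¹ * 1 := by
          exact mul_le_mul_of_nonneg_left h2 (by positivity)
      _ = (Real.sqrt d)⁻¹ := mul_one _
  calc ‖cinner (tensorVec a b) Ψ‖ ^ 2 ≤ ((Real.sqrt d)⁻¹) ^ 2 := by
        have hn : (0:ℝ) ≤ ‖cinner (tensorVec a b) Ψ‖ := norm_nonneg _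
        exact pow_le_pow_left₀ hn h3 2
    _ = (d : ℝ)⁻¹ := by rw [inv_pow, Real.sq_sqrt hdpos.le]

lemma maxent_cinner_self {d : ℕ} (hd : 1 ≤ d) {Ψ : Fin d × Fin d → ℂ} (hΨ : IsMaxEnt Ψ) :
    cinner Ψ Ψ = 1 := by
  obtain ⟨x, y, hx, hy, hpsi⟩ := hΨ
  have hdpos : (0 : ℝ) < d := by exact_mod_cast hd
  have hstar : ∀ (c : ℂ) (v w : Fin d × Fin d → ℂ),
      cinner (c • v) w = star c * cinner v w := by
    intro c v w
    simp [cinner, Finset.mul_sum]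
    exact Finset.sum_congr rfl fun i _ => by ring
  rw [hpsi, hstar, cinner_smul_right]
  have hsum : cinner (∑ j, tensorVec (x j) (y j)) (∑ j, tensorVec (x j) (y j)) = (d : ℂ) := by
    rw [cinner_sum_right]
    have : ∀ k, cinner (∑ j, tensorVec (x j) (y j)) (tensorVec (x k) (y k)) = 1 := by
      intro k
      have hsl : ∀ (v : Fin d × Fin d → ℂ) (w : Fin d → Fin d × Fin d → ℂ),
          cinner (∑ j, w j) v = ∑ j, cinner (w j) v := by
        intro v w
        simp only [cinner, Finset.sum_apply]
        rw [Finset.sum_comm]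
        refine Finset.sum_congr rfl fun i _ => ?_
        rw [map_sum, Finset.sum_mul]
      rw [hsl]
      rw [Fintype.sum_eq_single k]
      · rw [cinner_tensor, hx k k, hy k k]
        simp
      · intro j hj
        rw [cinner_tensor, hx j k, hy j k, if_neg hj]
        ring
    rw [Finset.sum_congr rfl fun k _ => this k]
    simp
  rw [Finset.sum_fn] at hsum ⊢
  rw [hsum]
  have : star ((Real.sqrt d : ℂ))⁻¹ = ((Real.sqrt d : ℂ))⁻¹ := by
    rw [star_inv₀, Complex.star_def, Complex.conj_ofReal]
  rw [this, ← mul_assoc, ← Complex.ofReal_inv]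
  rw [← Complex.ofReal_mul]
  rw [← Real.sqrt_inv]
  rw [Real.mul_self_sqrt (by positivity)]
  rw [← Complex.ofReal_natCast, ← Complex.ofReal_mul, inv_mul_cancel₀ (ne_of_gt hdpos)]
  norm_num


/-! ### vecProj and Kronecker lemmas -/

lemma vecProj_conjT {n : Type*} (v : n → ℂ) : (vecProj v)ᴴ = vecProj v := by
  ext i j
  simp only [Matrix.conjTranspose_apply, vecProj, Matrix.of_apply, star_mul',
    starRingEnd_apply, star_star]
  ring

lemma vecProj_psd {n : Type*} [Fintype n] (v : n → ℂ) : (vecProj v).PosSemidef := by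
  refine Matrix.PosSemidef.of_dotProduct_mulVec_nonneg (vecProj_conjT v) fun z => ?_
  set c : ℂ := ∑ j, star (v j) * z j with hc
  have h1 : dotProduct (star z) (vecProj v *ᵥ z) = star c * c := by
    have h2 : star c = ∑ i, star (z i) * v i := by
      rw [hc, star_sum]
      exact Finset.sum_congr rfl fun i _ => by rw [star_mul', star_star]; ring
    rw [h2, hc, Finset.sum_mul_sum]
    simp only [dotProduct, Matrix.mulVec, vecProj, Matrix.of_apply, Pi.star_apply,
      dotProduct, starRingEnd_apply]
    refine Finset.sum_congr rfl fun i _ => ?_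
    rw [Finset.mul_sum]
    exact Finset.sum_congr rfl fun j _ => by ring
  rw [h1]
  exact star_mul_self_nonneg c

lemma vecProj_mul_self {n : Type*} [Fintype n] {v : n → ℂ} (hv : cinner v v = 1) :
    vecProj v * vecProj v = vecProj v := by
  ext i j
  simp only [Matrix.mul_apply, vecProj, Matrix.of_apply]
  calc ∑ k, v i * (starRingEnd ℂ) (v k) * (v k * (starRingEnd ℂ) (v j))
      = (v i * (starRingEnd ℂ) (v j)) * ∑ k, (starRingEnd ℂ) (v k) * v k := by
        rw [Finset.mul_sum]
        exact Finset.sum_congr rfl fun k _ => by ring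
    _ = v i * (starRingEnd ℂ) (v j) := by rw [← cinner, hv, mul_one]

lemma trace_vecProj {n : Type*} [Fintype n] (v : n → ℂ) : (vecProj v).trace = cinner v v := by
  simp only [Matrix.trace, Matrix.diag, vecProj, Matrix.of_apply, cinner]
  exact Finset.sum_congr rfl fun i _ => mul_comm _ _

lemma kron_conjT {α β : Type*} (A : Matrix α α ℂ) (B : Matrix β β ℂ) :
    (A ⊗ₖ B)ᴴ = Aᴴ ⊗ₖ Bᴴ := by
  ext ⟨i, k⟩ ⟨j, l⟩
  simp only [Matrix.conjTranspose_apply, Matrix.kroneckerMap_apply, star_mul']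

lemma kron_psd {α β : Type*} [Fintype α] [Fintype β] [DecidableEq α] [DecidableEq β]
    {A : Matrix α α ℂ} {B : Matrix β β ℂ} (hA : A.PosSemidef) (hB : B.PosSemidef) :
    (A ⊗ₖ B).PosSemidef := by
  have h1 : A ⊗ₖ B = (hA.sqrt ⊗ₖ hB.sqrt) * (hA.sqrt ⊗ₖ hB.sqrt)ᴴ := by
    rw [kron_conjT, hA.posSemidef_sqrt.1.eq, hB.posSemidef_sqrt.1.eq,
      ← Matrix.mul_kronecker_mul, hA.sqrt_mul_self, hB.sqrt_mul_self]
  rw [h1]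
  exact Matrix.posSemidef_self_mul_conjTranspose _



/-! ### separability bound -/

lemma sum_proj_pair {n : Type*} [Fintype n] (v w : n → ℂ) :
    ∑ p, ∑ q, vecProj v p q * vecProj w q p = star (cinner v w) * cinner v w := by
  have h1 : star (cinner v w) = ∑ p, v p * (starRingEnd ℂ) (w p) := by
    rw [cinner, star_sum]
    refine Finset.sum_congr rfl fun p _ => ?_
    rw [star_mul', starRingEnd_apply, starRingEnd_apply, star_star]
  rw [h1, cinner, Finset.sum_mul_sum]
  refine Finset.sum_congr rfl fun p _ => Finset.sum_congr rfl fun q _ => ?_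
  simp only [vecProj, Matrix.of_apply]
  ring

lemma sep_trace_bound {d dC : ℕ} (hd : 1 ≤ d)
    (ρABC : Matrix ((Fin d × Fin d) × Fin dC) ((Fin d × Fin d) × Fin dC) ℂ)
    (hsep : IsSeparableDM (ptraceC ρABC))
    {Ψ : Fin d × Fin d → ℂ} (hΨ : IsMaxEnt Ψ) :
    ((ρABC * (vecProj Ψ ⊗ₖ (1 : Matrix (Fin dC) (Fin dC) ℂ))).trace).re ≤ (d : ℝ)⁻¹ := by
  obtain ⟨m, p, a, b, hp, hpsum, ha, hb, hAB⟩ := hsep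
  have h1 : (ρABC * (vecProj Ψ ⊗ₖ (1 : Matrix (Fin dC) (Fin dC) ℂ))).trace
      = ∑ pr : Fin d × Fin d, ∑ q : Fin d × Fin d,
          (ptraceC ρABC) pr q * vecProj Ψ q pr := by
    have key : ∀ pk : (Fin d × Fin d) × Fin dC,
        (∑ ql : (Fin d × Fin d) × Fin dC, ρABC pk ql *
          (vecProj Ψ ⊗ₖ (1 : Matrix (Fin dC) (Fin dC) ℂ)) ql pk)
        = ∑ q : Fin d × Fin d, ρABC pk (q, pk.2) * vecProj Ψ q pk.1 := by
      intro pk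
      rw [Fintype.sum_prod_type]
      refine Finset.sum_congr rfl fun q _ => ?_
      rw [Finset.sum_eq_single pk.2]
      · simp [Matrix.kroneckerMap_apply, Matrix.one_apply]
      · intro l _ hl
        simp [Matrix.kroneckerMap_apply, Matrix.one_apply, hl]
      · simp
    calc (ρABC * (vecProj Ψ ⊗ₖ (1 : Matrix (Fin dC) (Fin dC) ℂ))).trace
        = ∑ pk : (Fin d × Fin d) × Fin dC, ∑ ql : (Fin d × Fin d) × Fin dC,
            ρABC pk ql * (vecProj Ψ ⊗ₖ (1 : Matrix (Fin dC) (Fin dC) ℂ)) ql pk := by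
          simp only [Matrix.trace, Matrix.diag, Matrix.mul_apply]
      _ = ∑ pk : (Fin d × Fin d) × Fin dC,
            ∑ q : Fin d × Fin d, ρABC pk (q, pk.2) * vecProj Ψ q pk.1 :=
          Finset.sum_congr rfl fun pk _ => key pk
      _ = ∑ pr : Fin d × Fin d, ∑ k : Fin dC,
            ∑ q : Fin d × Fin d, ρABC (pr, k) (q, k) * vecProj Ψ q pr := by
          rw [Fintype.sum_prod_type]
      _ = ∑ pr : Fin d × Fin d, ∑ q : Fin d × Fin d,
            ∑ k : Fin dC, ρABC (pr, k) (q, k) * vecProj Ψ q pr :=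
          Finset.sum_congr rfl fun pr _ => Finset.sum_comm
      _ = ∑ pr : Fin d × Fin d, ∑ q : Fin d × Fin d, (ptraceC ρABC) pr q * vecProj Ψ q pr := by
          refine Finset.sum_congr rfl fun pr _ => Finset.sum_congr rfl fun q _ => ?_
          rw [ptraceC, Matrix.of_apply, Finset.sum_mul]
  set w : Fin m → ℂ := fun j => cinner (tensorVec (a j) (b j)) Ψ with hw
  have h2 : ∑ pr : Fin d × Fin d, ∑ q : Fin d × Fin d,
      (ptraceC ρABC) pr q * vecProj Ψ q pr
      = ∑ j, (p j : ℂ) * (star (w j) * w j) := by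
    rw [hAB]
    calc ∑ pr : Fin d × Fin d, ∑ q : Fin d × Fin d,
          (∑ j, (p j : ℂ) • vecProj (tensorVec (a j) (b j))) pr q * vecProj Ψ q pr
        = ∑ pr : Fin d × Fin d, ∑ q : Fin d × Fin d, ∑ j, (p j : ℂ) *
            (vecProj (tensorVec (a j) (b j)) pr q * vecProj Ψ q pr) := by
          refine Finset.sum_congr rfl fun pr _ => Finset.sum_congr rfl fun q _ => ?_
          simp only [Matrix.sum_apply, Matrix.smul_apply, smul_eq_mul, Finset.sum_mul]
          exact Finset.sum_congr rfl fun j _ => by ring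
      _ = ∑ j, ∑ pr : Fin d × Fin d, ∑ q : Fin d × Fin d, (p j : ℂ) *
            (vecProj (tensorVec (a j) (b j)) pr q * vecProj Ψ q pr) := by
          rw [show (∑ pr : Fin d × Fin d, ∑ q : Fin d × Fin d, ∑ j, (p j : ℂ) *
              (vecProj (tensorVec (a j) (b j)) pr q * vecProj Ψ q pr))
              = ∑ pr : Fin d × Fin d, ∑ j, ∑ q : Fin d × Fin d, (p j : ℂ) *
              (vecProj (tensorVec (a j) (b j)) pr q * vecProj Ψ q pr) from
            Finset.sum_congr rfl fun pr _ => Finset.sum_comm, Finset.sum_comm]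
      _ = ∑ j, (p j : ℂ) * (star (w j) * w j) := by
          refine Finset.sum_congr rfl fun j _ => ?_
          simp_rw [← Finset.mul_sum]
          rw [sum_proj_pair]
  rw [h1, h2]
  have h3 : (∑ j, (p j : ℂ) * (star (w j) * w j)).re = ∑ j, p j * ‖w j‖ ^ 2 := by
    rw [Complex.re_sum]
    refine Finset.sum_congr rfl fun j _ => ?_
    have : star (w j) * w j = ((‖w j‖ ^ 2 : ℝ) : ℂ) := by
      rw [Complex.star_def, mul_comm, Complex.mul_conj, Complex.normSq_eq_norm_sq]
    rw [this, ← Complex.ofReal_mul]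
    exact Complex.ofReal_re _
  rw [h3]
  calc ∑ j, p j * ‖w j‖ ^ 2 ≤ ∑ j, p j * (d : ℝ)⁻¹ := by
        refine Finset.sum_le_sum fun j _ => ?_
        exact mul_le_mul_of_nonneg_left (maxent_overlap hd hΨ (ha j) (hb j)) (hp j)
    _ = (d : ℝ)⁻¹ := by rw [← Finset.sum_mul, hpsum, one_mul]


/-- Theorem 1, fidelity form: if the reduced state of `AB` is separable,
then the fidelity with any target `|Ψ⟩⟨Ψ| ⊗ ρ_C` (with `Ψ` maximally entangled) is at
most `1/√d`; equivalently, the Bures angle is at least `arccos(1/√d)`. -/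
theorem fidelity_to_maxEnt_target_le (d dC : ℕ) (hd : 1 ≤ d)
    (ρABC : Matrix ((Fin d × Fin d) × Fin dC) ((Fin d × Fin d) × Fin dC) ℂ)
    (hρABC : IsDensityMatrix ρABC)
    (hsep : IsSeparableDM (ptraceC ρABC))
    (Ψ : Fin d × Fin d → ℂ) (hΨ : IsMaxEnt Ψ)
    (ρC : Matrix (Fin dC) (Fin dC) ℂ) (hρC : IsDensityMatrix ρC) :
    rootFidelity ρABC (vecProj Ψ ⊗ₖ ρC) ≤ (Real.sqrt d)⁻¹ ∧
      Real.arccos (Real.sqrt d)⁻¹ ≤ Real.arccos (rootFidelity ρABC (vecProj Ψ ⊗ₖ ρC)) := by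
  obtain ⟨hρ, hρtr⟩ := hρABC
  obtain ⟨hCpsd, hCtr⟩ := hρC
  have hΨΨ : cinner Ψ Ψ = 1 := maxent_cinner_self hd hΨ
  set P : Matrix (Fin d × Fin d) (Fin d × Fin d) ℂ := vecProj Ψ with hPdef
  have hPpsd : P.PosSemidef := vecProj_psd Ψ
  have hPP : P * P = P := vecProj_mul_self hΨΨ
  have hPher : Pᴴ = P := vecProj_conjT Ψ
  set Q : Matrix ((Fin d × Fin d) × Fin dC) ((Fin d × Fin d) × Fin dC) ℂ :=
    P ⊗ₖ (1 : Matrix (Fin dC) (Fin dC) ℂ) with hQdef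
  set σ : Matrix ((Fin d × Fin d) × Fin dC) ((Fin d × Fin d) × Fin dC) ℂ := P ⊗ₖ ρC with hσdef
  have hσpsd : σ.PosSemidef := kron_psd hPpsd hCpsd
  have hRpsd : (msqrt ρABC).PosSemidef := by rw [msqrt_eq hρ]; exact hρ.posSemidef_sqrt
  have hRher : (msqrt ρABC)ᴴ = msqrt ρABC := hRpsd.1.eq
  have hRR : msqrt ρABC * msqrt ρABC = ρABC := by rw [msqrt_eq hρ]; exact hρ.sqrt_mul_self
  have hSpsd : (msqrt σ).PosSemidef := by rw [msqrt_eq hσpsd]; exact hσpsd.posSemidef_sqrt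
  have hSher : (msqrt σ)ᴴ = msqrt σ := hSpsd.1.eq
  have hSS : msqrt σ * msqrt σ = σ := by rw [msqrt_eq hσpsd]; exact hσpsd.sqrt_mul_self
  have hS : msqrt σ = P ⊗ₖ msqrt ρC := by
    have hP2 : (P ⊗ₖ msqrt ρC).PosSemidef :=
      kron_psd hPpsd (by rw [msqrt_eq hCpsd]; exact hCpsd.posSemidef_sqrt)
    have hsq : (P ⊗ₖ msqrt ρC) ^ 2 = σ := by
      rw [pow_two, ← Matrix.mul_kronecker_mul, hPP, msqrt_eq hCpsd, hCpsd.sqrt_mul_self]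
    rw [msqrt_eq hσpsd]
    exact (hP2.eq_sqrt_of_sq_eq hσpsd hsq).symm
  have hQher : Qᴴ = Q := by rw [hQdef, kron_conjT, hPher, Matrix.conjTranspose_one]
  have hQQ : Q * Q = Q := by rw [hQdef, ← Matrix.mul_kronecker_mul, hPP, one_mul]
  have hQS : Q * msqrt σ = msqrt σ := by
    rw [hS, hQdef, ← Matrix.mul_kronecker_mul, hPP, one_mul]
  have hσQ : σ * Q = σ := by rw [hσdef, hQdef, ← Matrix.mul_kronecker_mul, hPP, mul_one]
  set R := msqrt ρABC with hRdef
  set S := msqrt σ with hSdef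
  have h1 : ((R * Q) * S)ᴴ = S * (Q * R) := by
    rw [Matrix.conjTranspose_mul, Matrix.conjTranspose_mul, hSher, hQher, hRher]
  have hfact : R * σ * R = ((R * Q) * S) * ((R * Q) * S)ᴴ := by
    symm
    calc ((R * Q) * S) * ((R * Q) * S)ᴴ = ((R * Q) * S) * (S * (Q * R)) := by rw [h1]
      _ = (R * S) * (S * (Q * R)) := by rw [mul_assoc R Q S, hQS]
      _ = R * ((S * S) * (Q * R)) := by simp only [mul_assoc]
      _ = R * (σ * (Q * R)) := by rw [hSS]
      _ = R * ((σ * Q) * R) := by simp only [mul_assoc]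
      _ = R * σ * R := by rw [hσQ, mul_assoc]
  have hmain : rootFidelity ρABC (vecProj Ψ ⊗ₖ ρC) ≤ (Real.sqrt d)⁻¹ := by
    unfold rootFidelity
    rw [show R * σ * R = ((R * Q) * S) * ((R * Q) * S)ᴴ from hfact]
    have hkey := trace_msqrt_factor_le (R * Q) S
    refine hkey.trans ?_
    have hA1 : ((R * Q) * (R * Q)ᴴ).trace = (ρABC * Q).trace := by
      rw [Matrix.conjTranspose_mul, hQher, hRher]
      calc ((R * Q) * (Q * R)).trace = (Q * ((R * R) * Q)).trace := by
            rw [Matrix.trace_mul_comm]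
            simp only [mul_assoc]
        _ = (Q * (ρABC * Q)).trace := by rw [hRR]
        _ = ((ρABC * Q) * Q).trace := Matrix.trace_mul_comm _ _
        _ = (ρABC * Q).trace := by rw [mul_assoc, hQQ]
    have hB1 : (S * Sᴴ).trace = 1 := by
      rw [hSher, hSS, hσdef, Matrix.trace_kronecker, trace_vecProj, hΨΨ, hCtr, one_mul]
    rw [hA1, hB1]
    have hsep' : ((ρABC * Q).trace).re ≤ (d : ℝ)⁻¹ := by
      rw [hQdef, hPdef]
      exact sep_trace_bound hd ρABC hsep hΨ
    simp only [Complex.one_re, Real.sqrt_one, mul_one]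
    calc Real.sqrt ((ρABC * Q).trace.re) ≤ Real.sqrt ((d : ℝ)⁻¹) := Real.sqrt_le_sqrt hsep'
      _ = (Real.sqrt d)⁻¹ := by rw [Real.sqrt_inv]
  have hFnn : 0 ≤ rootFidelity ρABC (vecProj Ψ ⊗ₖ ρC) := by
    unfold rootFidelity
    have hM : (R * σ * R).PosSemidef := by
      have := hσpsd.mul_mul_conjTranspose_same R
      rwa [hRher] at this
    have hpsd : (msqrt (R * σ * R)).PosSemidef := by
      rw [msqrt_eq hM]
      exact hM.posSemidef_sqrt
    exact psd_trace_re_nonneg hpsd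
  refine ⟨hmain, ?_⟩
  rw [Real.arccos_eq_pi_div_two_sub_arcsin, Real.arccos_eq_pi_div_two_sub_arcsin]
  have := Real.monotone_arcsin hmain
  linarith


end
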